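/- Let x and y be vertices in sEB_n with x < y. Then μ(x) ≥ μ(y) and f(x) < f(y). Moreover h(x) < h(y) if and only if μ(x) = μ(y), and h(x) > h(y) if and only if μ(x) > μ(y). -/

import Mathlib

/-- An `s`-coloured binary tree (of merges): each caret carries a colour. -/
inductive CTree (s : ℕ) : Type
  | leaf : CTree s
  | node (c : Fin s) (l r : CTree s) : CTree s
deriving DecidableEq

/-- Number of leaves of a coloured tree. -/
def CTree.leaves {s : ℕ} : CTree s → ℕ
  | .leaf => 1
  | .node _ l r => l.leaves + r.leaves

/-- Auxiliary elementarity predicate: each root-to-leaf path uses each colour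
at most once (carrying the set of colours already used). -/
def CTree.elemFrom {s : ℕ} : CTree s → Finset (Fin s) → Prop
  | .leaf, _ => True
  | .node c l r, used => c ∉ used ∧ l.elemFrom (insert c used) ∧ r.elemFrom (insert c used)

/-- An elementary coloured tree: at most one caret per colour per path. -/
def CTree.IsElem {s : ℕ} (t : CTree s) : Prop := t.elemFrom ∅

/-- An `s`-coloured forest: a finite ordered list of coloured trees.  The heads
(leaves) are at the top, the feet (roots) at the bottom; the forest records the
merges of a braige. -/
abbrev CForest (s : ℕ) : Type := List (CTree s)

/-- Total number of leaves of a forest. -/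
def CForest.leaves {s : ℕ} (F : CForest s) : ℕ := (F.map CTree.leaves).sum

/-- Number of feet (roots, i.e. trees) of a forest. -/
def CForest.feet {s : ℕ} (F : CForest s) : ℕ := F.length

/-- Elementary forest: each tree is elementary (at most one caret per colour
per head). -/
def CForest.IsElem {s : ℕ} (F : CForest s) : Prop := ∀ t ∈ F, t.IsElem

/-- `μ_k(F)`: the number of merges (trees) of `F` with exactly `k` leaves. -/
def muCount {s : ℕ} (F : CForest s) (k : ℕ) : ℕ := (F.map CTree.leaves).count k

/-- The tuple `μ(F) = (μ_{2^s}(F), μ_{2^s−1}(F), …, μ_4(F), μ_3(F))`, compared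
lexicographically. -/
def muVec (s : ℕ) (F : CForest s) : List ℕ :=
  ((List.range' 3 (2 ^ s - 2)).reverse).map (muCount F)

/-- `μ(F) < μ(F')` in the lexicographic order. -/
def muLt (s : ℕ) (F F' : CForest s) : Prop :=
  List.Lex (· < ·) (muVec s F) (muVec s F')

/-- `h = (μ, f)` ordered lexicographically: `h(F) < h(F')`. -/
def hLt (s : ℕ) (F F' : CForest s) : Prop :=
  muLt s F F' ∨ (muVec s F = muVec s F' ∧ F.length < F'.length)

/-- Graft a list of trees onto the leaves of a tree (returning the grafted tree
and the unused trees). -/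
def CTree.graft {s : ℕ} : CTree s → List (CTree s) → CTree s × List (CTree s)
  | .leaf, ts => (ts.headD .leaf, ts.tail)
  | .node c l r, ts =>
      let p := l.graft ts
      let q := r.graft p.2
      (.node c p.1 q.1, q.2)

/-- Graft a forest `F'` onto the leaves of the forest `E`: the composition of
the merging `F'` (near the heads) followed by the merging `E` (near the feet). -/
def CForest.graft {s : ℕ} : CForest s → List (CTree s) → CForest s
  | [], _ => []
  | t :: E, ts =>
      let p := CTree.graft t ts
      p.1 :: CForest.graft E p.2


section MuFHAux

lemma CTree.one_le_leaves {s : ℕ} (t : CTree s) : 1 ≤ t.leaves := by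
  induction t with
  | leaf => simp [CTree.leaves]
  | node c l r ihl ihr => simp only [CTree.leaves]; omega

lemma CTree.two_le_leaves {s : ℕ} (t : CTree s) (h : t ≠ CTree.leaf) : 2 ≤ t.leaves := by
  cases t with
  | leaf => exact absurd rfl h
  | node c l r =>
      have := l.one_le_leaves; have := r.one_le_leaves
      simp only [CTree.leaves]; omega

lemma CTree.graft_snd {s : ℕ} (t : CTree s) : ∀ ts : List (CTree s),
    (t.graft ts).2 = ts.drop t.leaves := by
  induction t with
  | leaf => intro ts; simp [CTree.graft, CTree.leaves, List.drop_one]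
  | node c l r ihl ihr =>
      intro ts
      simp only [CTree.graft, CTree.leaves]
      rw [ihr, ihl, List.drop_drop]

lemma CTree.graft_fst_leaves {s : ℕ} (t : CTree s) : ∀ ts : List (CTree s),
    t.leaves ≤ ts.length →
    (t.graft ts).1.leaves = ((ts.take t.leaves).map CTree.leaves).sum := by
  induction t with
  | leaf =>
      intro ts h
      cases ts with
      | nil => simp [CTree.leaves] at h
      | cons a ts' => simp [CTree.graft, CTree.leaves]
  | node c l r ihl ihr =>
      intro ts h
      have h' : l.leaves + r.leaves ≤ ts.length := h
      have hr1 := r.one_le_leaves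
      have hl1 := l.one_le_leaves
      simp only [CTree.graft, CTree.leaves]
      rw [CTree.graft_snd]
      rw [ihl ts (by omega), ihr _ (by rw [List.length_drop]; omega)]
      show _ = ((ts.take (l.leaves + r.leaves)).map CTree.leaves).sum
      rw [List.take_add, List.map_append, List.sum_append]

lemma CTree.leaves_le_of_elemFrom {s : ℕ} (t : CTree s) :
    ∀ u : Finset (Fin s), t.elemFrom u → t.leaves ≤ 2 ^ (s - u.card) := by
  induction t with
  | leaf => intro u _; simpa [CTree.leaves] using Nat.one_le_two_pow
  | node c l r ihl ihr =>
      intro u h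
      obtain ⟨hc, hl, hr⟩ := h
      have hcard : u.card + 1 ≤ s := by
        have h1 : (insert c u).card ≤ s := by
          simpa using Finset.card_le_univ (insert c u)
        rwa [Finset.card_insert_of_notMem hc] at h1
      have hl' := ihl _ hl
      have hr' := ihr _ hr
      rw [Finset.card_insert_of_notMem hc] at hl' hr'
      have hsplit : s - u.card = (s - (u.card + 1)) + 1 := by omega
      simp only [CTree.leaves]
      rw [hsplit, pow_succ]
      omega

lemma CTree.leaves_le_of_isElem {s : ℕ} (t : CTree s) (h : t.IsElem) : t.leaves ≤ 2 ^ s := by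
  have := t.leaves_le_of_elemFrom ∅ h
  simpa using this

lemma CForest.graft_cons {s : ℕ} (t : CTree s) (E : CForest s) (ts : List (CTree s)) :
    CForest.graft (t :: E) ts = (t.graft ts).1 :: CForest.graft E (ts.drop t.leaves) := by
  simp [CForest.graft, CTree.graft_snd]

lemma CForest.graft_length {s : ℕ} (E : CForest s) : ∀ ts : List (CTree s),
    (CForest.graft E ts).length = E.length := by
  induction E with
  | nil => intro ts; simp [CForest.graft]
  | cons t E ih => intro ts; simp [CForest.graft, ih]

lemma CForest.leaves_cons {s : ℕ} (t : CTree s) (E : CForest s) :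
    CForest.leaves (t :: E) = t.leaves + E.leaves := by
  simp [CForest.leaves]

lemma aux_length_le_sum (l : List ℕ) (h : ∀ x ∈ l, 1 ≤ x) : l.length ≤ l.sum := by
  induction l with
  | nil => simp
  | cons a l ih =>
      have h1 := h a (by simp)
      have h2 := ih (fun x hx => h x (by simp [hx]))
      simp only [List.length_cons, List.sum_cons]
      omega

lemma aux_lt_sum {l : List ℕ} (h1 : ∀ x ∈ l, 1 ≤ x) (h2 : 2 ≤ l.length) {x : ℕ}
    (hx : x ∈ l) : x < l.sum := by
  obtain ⟨l1, l2, rfl⟩ := List.append_of_mem hx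
  have e1 : l1.length ≤ l1.sum :=
    aux_length_le_sum l1 (fun y hy => h1 y (by simp [hy]))
  have e2 : l2.length ≤ l2.sum :=
    aux_length_le_sum l2 (fun y hy => h1 y (by simp [hy]))
  simp only [List.sum_append, List.sum_cons, List.length_append, List.length_cons] at h2 ⊢
  omega

lemma CForest.length_le_leaves {s : ℕ} (E : CForest s) : E.length ≤ E.leaves := by
  have := aux_length_le_sum (E.map CTree.leaves) (by
    intro x hx
    obtain ⟨t, _, rfl⟩ := List.mem_map.mp hx
    exact t.one_le_leaves)
  simpa [CForest.leaves] using this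

lemma CForest.length_lt_leaves {s : ℕ} (E : CForest s)
    (h : ∃ t ∈ E, t ≠ CTree.leaf) : E.length < E.leaves := by
  induction E with
  | nil => obtain ⟨t, ht, _⟩ := h; simp at ht
  | cons a E ih =>
      obtain ⟨t, ht, hnt⟩ := h
      have hle := CForest.length_le_leaves E
      rw [CForest.leaves_cons]
      rcases List.mem_cons.mp ht with rfl | ht'
      · have h2 := t.two_le_leaves hnt
        simp only [List.length_cons]; omega
      · have h2 := ih ⟨t, ht', hnt⟩
        have h1 := a.one_le_leaves
        simp only [List.length_cons]; omega

/-- The count comparison property used in the lexicographic argument. -/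
def QCnt (A B : List ℕ) (K : ℕ) : Prop :=
  (∀ k, K < k → List.count k A = List.count k B) ∧
  (3 ≤ K → List.count K B < List.count K A)

lemma QCnt_append {A A' B B' : List ℕ} {K1 K2 : ℕ}
    (h1 : QCnt A B K1) (h2 : QCnt A' B' K2) : QCnt (A ++ A') (B ++ B') (max K1 K2) := by
  constructor
  · intro k hk
    rw [List.count_append, List.count_append,
      h1.1 k (lt_of_le_of_lt (le_max_left _ _) hk),
      h2.1 k (lt_of_le_of_lt (le_max_right _ _) hk)]
  · intro h3
    rw [List.count_append, List.count_append]
    rcases le_total K1 K2 with h | h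
    · have hK : max K1 K2 = K2 := max_eq_right h
      rw [hK] at h3 ⊢
      have hstrict := h2.2 h3
      rcases lt_or_eq_of_le h with hlt | rfl
      · have heq := h1.1 K2 hlt; omega
      · have := h1.2 h3; omega
    · have hK : max K1 K2 = K1 := max_eq_left h
      rw [hK] at h3 ⊢
      have hstrict := h1.2 h3
      rcases lt_or_eq_of_le h with hlt | rfl
      · have heq := h2.1 K1 hlt; omega
      · have := h2.2 h3; omega

lemma main_counts {s : ℕ} (E : CForest s) : ∀ ts : List (CTree s), CForest.leaves E ≤ ts.length →
    ∃ K, QCnt ((CForest.graft E ts).map CTree.leaves)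
      ((ts.take (CForest.leaves E)).map CTree.leaves) K := by
  induction E with
  | nil =>
      intro ts _
      refine ⟨0, fun k _ => ?_, fun h3 => absurd h3 (by omega)⟩
      simp [CForest.graft, CForest.leaves]
  | cons t E ih =>
      intro ts hlen
      rw [CForest.leaves_cons] at hlen ⊢
      have h1 : 1 ≤ t.leaves := t.one_le_leaves
      have hE1 : CForest.leaves E ≤ (ts.drop t.leaves).length := by rw [List.length_drop]; omega
      have htl : t.leaves ≤ ts.length := by omega
      obtain ⟨K1, hQ1⟩ : ∃ K1,
          QCnt [(CTree.graft t ts).1.leaves] ((ts.take t.leaves).map CTree.leaves) K1 := by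
        cases t with
        | leaf =>
            refine ⟨0, fun k _ => ?_, fun h3 => absurd h3 (by omega)⟩
            cases ts with
            | nil => simp [CTree.leaves] at htl
            | cons a ts' => simp [CTree.graft, CTree.leaves]
        | node c l r =>
            have hsum := CTree.graft_fst_leaves (CTree.node c l r) ts htl
            set chunk := (ts.take (CTree.node c l r).leaves).map CTree.leaves with hchunk
            have hpos : ∀ x ∈ chunk, 1 ≤ x := by
              intro x hx
              obtain ⟨u, _, rfl⟩ := List.mem_map.mp hx
              exact u.one_le_leaves
            have hlen2 : 2 ≤ chunk.length := by
              rw [hchunk, List.length_map, List.length_take]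
              have h2 : 2 ≤ (CTree.node c l r).leaves :=
                CTree.two_le_leaves _ (by simp)
              omega
            refine ⟨chunk.sum, ?_, ?_⟩
            · intro k hk
              rw [hsum]
              have hnotmem : k ∉ chunk := fun hkmem =>
                absurd (aux_lt_sum hpos hlen2 hkmem) (by omega)
              rw [List.count_eq_zero.mpr hnotmem]
              have hne : chunk.sum ≠ k := by omega
              simp [List.count_cons, hne]
            · intro _
              rw [hsum]
              have hnotmem : chunk.sum ∉ chunk := fun hmem =>
                absurd (aux_lt_sum hpos hlen2 hmem) (lt_irrefl _)
              rw [List.count_eq_zero.mpr hnotmem]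
              simp
      obtain ⟨K2, hQ2⟩ := ih (ts.drop t.leaves) hE1
      refine ⟨max K1 K2, ?_⟩
      rw [CForest.graft_cons, List.take_add, List.map_append, List.map_cons,
        ← List.singleton_append]
      exact QCnt_append hQ1 hQ2

lemma lex_of_sorted {f g : ℕ → ℕ} : ∀ l : List ℕ, l.Pairwise (· > ·) → ∀ K, K ∈ l →
    f K < g K → (∀ j ∈ l, K < j → f j = g j) →
    List.Lex (· < ·) (l.map f) (l.map g) := by
  intro l
  induction l with
  | nil => intro _ K hK; simp at hK
  | cons a l ih =>
      intro hs K hK hfg hup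
      rcases List.mem_cons.mp hK with rfl | hK'
      · exact List.Lex.rel hfg
      · have haK : K < a := (List.pairwise_cons.mp hs).1 K hK'
        have hfa : f a = g a := hup a (by simp) haK
        rw [List.map_cons, List.map_cons, hfa]
        exact List.Lex.cons
          (ih hs.of_cons K hK' hfg (fun j hj hKj => hup j (by simp [hj]) hKj))

lemma lex_irrefl_nat : ∀ l : List ℕ, ¬ List.Lex (· < ·) l l := by
  intro l
  induction l with
  | nil => intro h; cases h
  | cons a l ih =>
      intro h
      cases h with
      | cons h' => exact ih h'
      | rel h' => exact lt_irrefl _ h'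

lemma lex_asymm_nat : ∀ {l1 l2 : List ℕ},
    List.Lex (· < ·) l1 l2 → List.Lex (· < ·) l2 l1 → False := by
  intro l1 l2 h
  induction h with
  | nil =>
      intro h2; cases h2
  | @cons a t1 t2 h ih =>
      intro h2
      cases h2 with
      | cons h' => exact ih h'
      | rel h' => exact lt_irrefl _ h'
  | @rel a t1 b t2 h =>
      intro h2
      cases h2 with
      | cons h' => exact lt_irrefl _ h
      | rel h' => exact lt_asymm h h'

end MuFHAux

/-- Let `x` and `y` be vertices of `sEB_n` with `x < y`, i.e.
`y` is obtained from `x` by a nontrivial splitting.  (Concretely: `x` and `y`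
are dangling elementary braiges with merge forests `Fx` and `Fy` on `n` strands
and, for suitable representatives, `Fx` is obtained by grafting the trees of
`Fy` onto the leaves of a nontrivial forest `E`.)  Then `μ(x) ≥ μ(y)` and
`f(x) < f(y)`; moreover `h(x) < h(y)` iff `μ(x) = μ(y)`, and `h(x) > h(y)` iff
`μ(x) > μ(y)`. -/
theorem mu_f_h_of_splitting (s n : ℕ) (hs : 1 ≤ s)
    (Fx Fy E : CForest s)
    (hFx : Fx.leaves = n) (hFy : Fy.leaves = n)
    (hFxElem : Fx.IsElem) (hFyElem : Fy.IsElem)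
    (hfit : E.leaves = Fy.length)
    (hgraft : Fx = CForest.graft E Fy)
    (hnontrivial : ∃ t ∈ E, t ≠ CTree.leaf) :
    (muLt s Fy Fx ∨ muVec s Fy = muVec s Fx) ∧
    Fx.length < Fy.length ∧
    (hLt s Fx Fy ↔ muVec s Fx = muVec s Fy) ∧
    (hLt s Fy Fx ↔ muLt s Fy Fx) := by
  have h2s : 2 ≤ 2 ^ s := by
    have : 2 ^ 1 ≤ 2 ^ s := Nat.pow_le_pow_right (by norm_num) hs
    simpa using this
  -- feet
  have hf : Fx.length < Fy.length := by
    rw [hgraft, CForest.graft_length, ← hfit]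
    exact CForest.length_lt_leaves E hnontrivial
  -- counts
  obtain ⟨K, hQ⟩ := main_counts E Fy hfit.le
  rw [hfit, List.take_length, ← hgraft] at hQ
  obtain ⟨hQ1, hQ2⟩ := hQ
  have hL3 : ∀ j ∈ (List.range' 3 (2 ^ s - 2)).reverse, 3 ≤ j ∧ j ≤ 2 ^ s := by
    intro j hj
    rw [List.mem_reverse, List.mem_range'_1] at hj
    omega
  have hmain : muLt s Fy Fx ∨ muVec s Fy = muVec s Fx := by
    by_cases hK3 : 3 ≤ K
    · left
      have hcnt := hQ2 hK3
      have hKmem : K ∈ Fx.map CTree.leaves :=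
        List.count_pos_iff.mp (lt_of_le_of_lt (Nat.zero_le _) hcnt)
      obtain ⟨t, htFx, hteq⟩ := List.mem_map.mp hKmem
      have hK2s : K ≤ 2 ^ s := by
        rw [← hteq]; exact t.leaves_le_of_isElem (hFxElem t htFx)
      have hsort : ((List.range' 3 (2 ^ s - 2)).reverse).Pairwise (· > ·) :=
        List.pairwise_reverse.mpr (List.pairwise_lt_range' (s := 3))
      have hmem : K ∈ (List.range' 3 (2 ^ s - 2)).reverse := by
        rw [List.mem_reverse, List.mem_range'_1]
        omega
      exact lex_of_sorted _ hsort K hmem hcnt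
        (fun j hj hKj => (hQ1 j hKj).symm)
    · right
      refine List.map_congr_left (fun j hj => ?_)
      have := hL3 j hj
      exact (hQ1 j (by omega)).symm
  refine ⟨hmain, hf, ?_, ?_⟩
  · constructor
    · rintro (h | ⟨heq, _⟩)
      · exfalso
        rcases hmain with h' | h'
        · exact lex_asymm_nat h h'
        · have h2 : List.Lex (· < ·) (muVec s Fx) (muVec s Fy) := h
          rw [h'] at h2
          exact lex_irrefl_nat _ h2
      · exact heq
    · intro heq
      exact Or.inr ⟨heq, hf⟩
  · constructor
    · rintro (h | ⟨_, hlen⟩)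
      · exact h
      · omega
    · intro h
      exact Or.inl h
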